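/- Let k be a field, n ≥ 2, and let a, b, c, d ∈ k[x₀,…,x_{n−1}] be homogeneous of degrees r−1, r, r−2, r−1 respectively with ad − bc ≠ 0 and gcd(a xₙ + b, c xₙ + d) = 1. Then the rational map F of Pⁿ given by ((c xₙ + d)x₀ : ⋯ : (c xₙ + d)x_{n−1} : a xₙ + b) is birational, with inverse given (up to a common factor) by ((−c xₙ + a)x₀ : ⋯ : (−c xₙ + a)x_{n−1} : d xₙ − b). -/

import Mathlib

open MvPolynomial

lemma aeval_mul_of_isHomogeneous {σ : Type*} {k : Type*} [CommSemiring k] {S : Type*}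
    [CommSemiring S] [Algebra k S] {p : MvPolynomial σ k} {m : ℕ} (hp : p.IsHomogeneous m)
    (t : S) (f : σ → S) :
    aeval (fun i => t * f i) p = t ^ m * aeval f p := by
  conv_lhs => rw [p.as_sum]
  conv_rhs => rw [p.as_sum]
  rw [map_sum, map_sum, Finset.mul_sum]
  refine Finset.sum_congr rfl fun s hs => ?_
  rw [aeval_monomial, aeval_monomial]
  have hdeg : (s.sum fun _ e => e) = m := by
    simpa [Finsupp.weight_apply, Finsupp.sum] using hp (mem_support_iff.mp hs)
  have : (Finsupp.prod s fun i e => (t * f i) ^ e)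
      = t ^ m * Finsupp.prod s fun i e => f i ^ e := by
    rw [← hdeg]
    simp only [Finsupp.prod, Finsupp.sum, mul_pow, Finset.prod_mul_distrib,
      Finset.prod_pow_eq_pow_sum]
  rw [this]; ring

/-- The de Jonquières-type map `F = ((cxₙ+d)x₀ : ⋯ : (cxₙ+d)x_{n−1} : axₙ+b)` of `Pⁿ`,
with `a,b,c,d` forms in `x₀,…,x_{n−1}` of degrees `r−1, r, r−2, r−1` and `ad − bc ≠ 0`,
is birational, with inverse given (up to a common nonzero factor) by
`((−cxₙ+a)x₀ : ⋯ : (−cxₙ+a)x_{n−1} : dxₙ−b)`. -/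
theorem deJonquieres_birational {k : Type} [Field k] {n : ℕ} (hn : 2 ≤ n) {r : ℕ}
    (hr : 2 ≤ r) (a b c d : MvPolynomial (Fin n) k)
    (ha : a.IsHomogeneous (r - 1)) (hb : b.IsHomogeneous r)
    (hc : c.IsHomogeneous (r - 2)) (hd : d.IsHomogeneous (r - 1))
    (hdet : a * d - b * c ≠ 0)
    (hcop : IsRelPrime
      ((rename (Fin.castSucc) a) * X (Fin.last n) + rename (Fin.castSucc) b)
      ((rename (Fin.castSucc) c) * X (Fin.last n) + rename (Fin.castSucc) d)) :
    ∃ h₁ h₂ : MvPolynomial (Fin (n + 1)) k, h₁ ≠ 0 ∧ h₂ ≠ 0 ∧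
      ∀ i : Fin (n + 1),
        aeval (Fin.lastCases
            ((rename (Fin.castSucc) a) * X (Fin.last n) + rename (Fin.castSucc) b)
            (fun j : Fin n =>
              ((rename (Fin.castSucc) c) * X (Fin.last n) + rename (Fin.castSucc) d) *
                X j.castSucc))
          (Fin.lastCases
            ((rename (Fin.castSucc) d) * X (Fin.last n) - rename (Fin.castSucc) b)
            (fun j : Fin n =>
              (-(rename (Fin.castSucc) c) * X (Fin.last n) + rename (Fin.castSucc) a) *
                X j.castSucc) i)
          = h₁ * X i ∧
        aeval (Fin.lastCases
            ((rename (Fin.castSucc) d) * X (Fin.last n) - rename (Fin.castSucc) b)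
            (fun j : Fin n =>
              (-(rename (Fin.castSucc) c) * X (Fin.last n) + rename (Fin.castSucc) a) *
                X j.castSucc))
          (Fin.lastCases
            ((rename (Fin.castSucc) a) * X (Fin.last n) + rename (Fin.castSucc) b)
            (fun j : Fin n =>
              ((rename (Fin.castSucc) c) * X (Fin.last n) + rename (Fin.castSucc) d) *
                X j.castSucc) i)
          = h₂ * X i := by
  classical
  obtain ⟨m, rfl⟩ : ∃ m, r = m + 2 := ⟨r - 2, by omega⟩
  have hm1 : m + 2 - 1 = m + 1 := rfl
  have hm2 : m + 2 - 2 = m := rfl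
  rw [hm1] at ha hd
  rw [hm2] at hc
  set ρ : Fin n → Fin (n + 1) := Fin.castSucc with hρdef
  have hρ : Function.Injective ρ := Fin.castSucc_injective n
  set A : MvPolynomial (Fin (n + 1)) k := rename ρ a with hA
  set B : MvPolynomial (Fin (n + 1)) k := rename ρ b with hB
  set C : MvPolynomial (Fin (n + 1)) k := rename ρ c with hC
  set D : MvPolynomial (Fin (n + 1)) k := rename ρ d with hD
  set Xl : MvPolynomial (Fin (n + 1)) k := X (Fin.last n) with hXl
  set t : MvPolynomial (Fin (n + 1)) k := C * Xl + D with ht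
  set s : MvPolynomial (Fin (n + 1)) k := -C * Xl + A with hs
  set F : Fin (n + 1) → MvPolynomial (Fin (n + 1)) k :=
    Fin.lastCases (A * Xl + B) (fun j => t * X j.castSucc) with hF
  set G : Fin (n + 1) → MvPolynomial (Fin (n + 1)) k :=
    Fin.lastCases (D * Xl - B) (fun j => s * X j.castSucc) with hG
  -- evaluation of renamed homogeneous forms
  have keyF : ∀ (p : MvPolynomial (Fin n) k) (e : ℕ), p.IsHomogeneous e →
      aeval F (rename ρ p) = t ^ e * rename ρ p := by
    intro p e hp
    rw [aeval_rename]
    have : (F ∘ ρ) = fun j => t * (fun i : Fin n => X (ρ i)) j := by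
      funext j
      simp [hF, hρdef, Fin.lastCases_castSucc]
    rw [this, aeval_mul_of_isHomogeneous hp]
    congr 1
    rw [rename_eq_aeval]; rfl
  have keyG : ∀ (p : MvPolynomial (Fin n) k) (e : ℕ), p.IsHomogeneous e →
      aeval G (rename ρ p) = s ^ e * rename ρ p := by
    intro p e hp
    rw [aeval_rename]
    have : (G ∘ ρ) = fun j => s * (fun i : Fin n => X (ρ i)) j := by
      funext j
      simp [hG, hρdef, Fin.lastCases_castSucc]
    rw [this, aeval_mul_of_isHomogeneous hp]
    congr 1
    rw [rename_eq_aeval]; rfl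
  -- nonvanishing
  have hdetAD : A * D - B * C ≠ 0 := by
    intro h
    apply hdet
    apply rename_injective ρ hρ
    rw [map_sub, map_mul, map_mul, map_zero]
    exact h
  have hXlne : Xl ≠ 0 := X_ne_zero _
  -- the evaluation sending X_last to 0 and X_{castSucc j} to X j
  set ev : Fin (n + 1) → MvPolynomial (Fin n) k := Fin.lastCases 0 X with hev
  have hevρ : ∀ p : MvPolynomial (Fin n) k, aeval ev (rename ρ p) = p := by
    intro p
    rw [aeval_rename]
    have : (ev ∘ ρ) = X := by
      funext j
      simp [hev, hρdef, Fin.lastCases_castSucc]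
    rw [this]
    simp [aeval_X_left]
  have hevXl : aeval ev Xl = 0 := by
    rw [hXl, aeval_X]; simp [hev, Fin.lastCases_last]
  have htne : t ≠ 0 := by
    intro h
    have hd0 : d = 0 := by
      have := congrArg (aeval ev) h
      simp only [ht, map_add, map_mul, map_zero] at this
      rw [hevρ c, hevρ d, hevXl] at this
      simpa using this
    have hc0 : c = 0 := by
      rw [hd0] at hD
      have : C * Xl = 0 := by
        have := h
        rw [ht, hD, map_zero, add_zero] at this
        exact this
      rcases mul_eq_zero.mp this with hC0 | hX0
      · apply rename_injective ρ hρ; rw [map_zero]; exact hC0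
      · exact absurd hX0 hXlne
    apply hdet
    rw [hc0, hd0]; ring
  have hsne : s ≠ 0 := by
    intro h
    have ha0 : a = 0 := by
      have := congrArg (aeval ev) h
      simp only [hs, map_add, map_mul, map_neg, map_zero] at this
      rw [hevρ c, hevρ a, hevXl] at this
      simpa using this
    have hc0 : c = 0 := by
      rw [ha0] at hA
      have : (-C) * Xl = 0 := by
        have := h
        rw [hs, hA, map_zero, add_zero] at this
        exact this
      rcases mul_eq_zero.mp this with hC0 | hX0
      · apply rename_injective ρ hρ; rw [map_zero]
        simpa [neg_eq_zero] using hC0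
      · exact absurd hX0 hXlne
    apply hdet
    rw [ha0, hc0]; ring
  refine ⟨t ^ (m + 1) * (A * D - B * C), s ^ (m + 1) * (A * D - B * C),
    mul_ne_zero (pow_ne_zero _ htne) hdetAD,
    mul_ne_zero (pow_ne_zero _ hsne) hdetAD, ?_⟩
  -- basic evaluations
  have hFA : aeval F A = t ^ (m + 1) * A := keyF a _ ha
  have hFB : aeval F B = t ^ (m + 2) * B := keyF b _ hb
  have hFC : aeval F C = t ^ m * C := keyF c _ hc
  have hFD : aeval F D = t ^ (m + 1) * D := keyF d _ hd
  have hGA : aeval G A = s ^ (m + 1) * A := keyG a _ ha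
  have hGB : aeval G B = s ^ (m + 2) * B := keyG b _ hb
  have hGC : aeval G C = s ^ m * C := keyG c _ hc
  have hGD : aeval G D = s ^ (m + 1) * D := keyG d _ hd
  have hFXl : aeval F Xl = A * Xl + B := by
    rw [hXl, aeval_X]; simp [hF, Fin.lastCases_last]; exact Or.inl hXl
  have hGXl : aeval G Xl = D * Xl - B := by
    rw [hXl, aeval_X]; simp [hG, Fin.lastCases_last]; exact Or.inl hXl
  have hFXc : ∀ j : Fin n, aeval (R := k) F (X j.castSucc) = t * X j.castSucc := by
    intro j; simp only [aeval_X]; simp [hF, Fin.lastCases_castSucc]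
  have hGXc : ∀ j : Fin n, aeval (R := k) G (X j.castSucc) = s * X j.castSucc := by
    intro j; simp only [aeval_X]; simp [hG, Fin.lastCases_castSucc]
  intro i
  induction i using Fin.lastCases with
  | last =>
    constructor
    · rw [Fin.lastCases_last]
      rw [map_sub, map_mul, hFD, hFB, hFXl]
      rw [show t ^ (m + 2) = t ^ (m + 1) * t from pow_succ t (m + 1), ht]
      ring
    · rw [Fin.lastCases_last]
      rw [map_add, map_mul, hGA, hGB, hGXl]
      rw [show s ^ (m + 2) = s ^ (m + 1) * s from pow_succ s (m + 1), hs]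
      ring
  | cast j =>
    constructor
    · rw [Fin.lastCases_castSucc]
      rw [map_mul, map_add, map_mul, map_neg, hFC, hFA, hFXl, hFXc]
      rw [show t ^ (m + 1) = t ^ m * t from pow_succ t m, ht]
      ring
    · rw [Fin.lastCases_castSucc]
      rw [map_mul, map_add, map_mul, hGC, hGD, hGXl, hGXc]
      rw [show s ^ (m + 1) = s ^ m * s from pow_succ s m, hs]
      ring
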